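/- Let r ≥ 1 and let z_1, …, z_r be distinct real numbers. Define κ : ℝ → ℝ by κ(t) = sin(t)/(2t) for t ≠ 0 and κ(0) = 1/2, and η : ℝ → ℝ by η(t) = (1 − cos t)/(2t) for t ≠ 0 and η(0) = 0. Then the 2r × 2r real symmetric matrix Σ indexed by pairs (T, i) with T ∈ {Z, W} and i ∈ {1,…,r}, with entries Σ_{(Z,i),(Z,j)} = Σ_{(W,i),(W,j)} = κ(z_i − z_j) and Σ_{(Z,i),(W,j)} = η(z_i − z_j), is positive definite. -/

import Mathlib

open Real

/-- `κ(t) = sin(t)/(2t)` for `t ≠ 0`, `κ(0) = 1/2`. -/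
noncomputable def kappaFun (t : ℝ) : ℝ := if t = 0 then 1 / 2 else Real.sin t / (2 * t)
/-- `η(t) = (1 - cos t)/(2t)` for `t ≠ 0`, `η(0) = 0`. -/
noncomputable def etaFun (t : ℝ) : ℝ := if t = 0 then 0 else (1 - Real.cos t) / (2 * t)

lemma kappa_integral (t : ℝ) : kappaFun t = ∫ s in (0:ℝ)..1, Real.cos (t * s) / 2 := by
  rcases eq_or_ne t 0 with h | h
  · simp [kappaFun, h]
  · rw [kappaFun, if_neg h]
    have h2 : ∫ s in (0:ℝ)..1, Real.cos (t * s) / 2 = (∫ s in (0:ℝ)..1, Real.cos (t * s)) / 2 := by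
      simpa using intervalIntegral.integral_div 2 (fun s => Real.cos (t * s)) (a := (0:ℝ)) (b := 1)
    rw [h2, intervalIntegral.integral_comp_mul_left _ h, integral_cos, smul_eq_mul]
    rw [mul_zero, mul_one, Real.sin_zero]
    field_simp
    try ring
    try tauto

lemma eta_integral (t : ℝ) : etaFun t = ∫ s in (0:ℝ)..1, Real.sin (t * s) / 2 := by
  rcases eq_or_ne t 0 with h | h
  · simp [etaFun, h]
  · rw [etaFun, if_neg h]
    have h2 : ∫ s in (0:ℝ)..1, Real.sin (t * s) / 2 = (∫ s in (0:ℝ)..1, Real.sin (t * s)) / 2 := by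
      simpa using intervalIntegral.integral_div 2 (fun s => Real.sin (t * s)) (a := (0:ℝ)) (b := 1)
    rw [h2, intervalIntegral.integral_comp_mul_left _ h, integral_sin, smul_eq_mul]
    rw [mul_zero, mul_one, Real.cos_zero]
    field_simp
    try ring
    try tauto

lemma kappa_even (t : ℝ) : kappaFun (-t) = kappaFun t := by
  rcases eq_or_ne t 0 with h | h
  · simp [h]
  · rw [kappaFun, kappaFun, if_neg (neg_ne_zero.mpr h), if_neg h, Real.sin_neg]
    field_simp

/-- For distinct real points `z_1,…,z_r`, the `2r × 2r` symmetric matrix with entries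
`Σ_{(Z,i),(Z,j)} = Σ_{(W,i),(W,j)} = κ(z_i - z_j)` and `Σ_{(Z,i),(W,j)} = η(z_i - z_j)`
(`false` stands for `Z`, `true` for `W`) is positive definite.  This is the covariance
matrix of `(Z(z_i), W(z_i))_i` for the limiting stationary Gaussian pair process. -/
theorem statement13 (r : ℕ) (hr : 1 ≤ r) (z : Fin r → ℝ) (hz : Function.Injective z) :
    Matrix.PosDef (Matrix.of fun p q : Bool × Fin r =>
      match p.1, q.1 with
      | false, false => kappaFun (z p.2 - z q.2)
      | true, true => kappaFun (z p.2 - z q.2)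
      | false, true => etaFun (z p.2 - z q.2)
      | true, false => etaFun (z q.2 - z p.2)) := by
  classical
  set M : Matrix (Bool × Fin r) (Bool × Fin r) ℝ := (Matrix.of fun p q : Bool × Fin r =>
      match p.1, q.1 with
      | false, false => kappaFun (z p.2 - z q.2)
      | true, true => kappaFun (z p.2 - z q.2)
      | false, true => etaFun (z p.2 - z q.2)
      | true, false => etaFun (z q.2 - z p.2)) with hMdef
  -- the two families of real functions whose Gram matrix is M
  set e : Bool × Fin r → ℝ → ℝ := fun p s =>
    if p.1 then -Real.sin (z p.2 * s) else Real.cos (z p.2 * s) with he_def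
  set f : Bool × Fin r → ℝ → ℝ := fun p s =>
    if p.1 then Real.cos (z p.2 * s) else Real.sin (z p.2 * s) with hf_def
  have hce : ∀ p, Continuous (e p) := by
    intro p
    rcases p with ⟨b, i⟩
    cases b <;> simp only [he_def, Bool.false_eq_true, if_false, if_true] <;> fun_prop
  have hcf : ∀ p, Continuous (f p) := by
    intro p
    rcases p with ⟨b, i⟩
    cases b <;> simp only [hf_def, Bool.false_eq_true, if_false, if_true] <;> fun_prop
  have hentry : ∀ p q, M p q = ∫ s in (0:ℝ)..1,
      (e p s * e q s + f p s * f q s) / 2 := by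
    intro p q
    rcases p with ⟨bp, i⟩
    rcases q with ⟨bq, j⟩
    cases bp <;> cases bq
    · -- false false : kappa
      rw [hMdef]
      show kappaFun (z i - z j) = _
      rw [kappa_integral]
      refine intervalIntegral.integral_congr fun s _ => ?_
      simp only [he_def, hf_def, Bool.false_eq_true, if_false]
      rw [sub_mul, Real.cos_sub]
    · -- false true : eta
      rw [hMdef]
      show etaFun (z i - z j) = _
      rw [eta_integral]
      refine intervalIntegral.integral_congr fun s _ => ?_
      simp only [he_def, hf_def, Bool.false_eq_true, if_false, if_true]
      rw [sub_mul, Real.sin_sub]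
      ring
    · -- true false : eta (z j - z i)
      rw [hMdef]
      show etaFun (z j - z i) = _
      rw [eta_integral]
      refine intervalIntegral.integral_congr fun s _ => ?_
      simp only [he_def, hf_def, Bool.false_eq_true, if_false, if_true]
      rw [sub_mul, Real.sin_sub]
      ring
    · -- true true : kappa
      rw [hMdef]
      show kappaFun (z i - z j) = _
      rw [kappa_integral]
      refine intervalIntegral.integral_congr fun s _ => ?_
      simp only [he_def, hf_def, if_true]
      rw [sub_mul, Real.cos_sub]
      ring
  rw [Matrix.posDef_iff_dotProduct_mulVec]
  constructor
  · -- Hermitian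
    ext p q
    rcases p with ⟨bp, i⟩
    rcases q with ⟨bq, j⟩
    rw [Matrix.conjTranspose_apply]
    cases bp <;> cases bq <;>
      simp only [hMdef, Matrix.of_apply, star_trivial] <;>
      rw [show z j - z i = -(z i - z j) by ring] <;>
      try rw [kappa_even]
  · intro x hx
    set E : ℝ → ℝ := fun s => ∑ p : Bool × Fin r, x p * e p s with hE_def
    set F : ℝ → ℝ := fun s => ∑ p : Bool × Fin r, x p * f p s with hF_def
    have hcE : Continuous E := by
      apply continuous_finset_sum
      intro p _
      exact continuous_const.mul (hce p)
    have hcF : Continuous F := by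
      apply continuous_finset_sum
      intro p _
      exact continuous_const.mul (hcf p)
    have hQ : dotProduct (star x) (M.mulVec x)
        = ∫ s in (0:ℝ)..1, ((E s) ^ 2 + (F s) ^ 2) / 2 := by
      have h1 : dotProduct (star x) (M.mulVec x)
          = ∑ p : Bool × Fin r, ∑ q : Bool × Fin r, x p * x q * M p q := by
        simp only [dotProduct, Matrix.mulVec, Pi.star_apply, star_trivial]
        refine Finset.sum_congr rfl fun p _ => ?_
        rw [Finset.mul_sum]
        exact Finset.sum_congr rfl fun q _ => by ring
      have hco : ∀ p q : Bool × Fin r,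
          Continuous (fun s => x p * x q * ((e p s * e q s + f p s * f q s) / 2)) :=
        fun p q => continuous_const.mul
          ((((hce p).mul (hce q)).add ((hcf p).mul (hcf q))).div_const 2)
      rw [h1]
      have h2 : ∀ p q : Bool × Fin r, x p * x q * M p q
          = ∫ s in (0:ℝ)..1, x p * x q * ((e p s * e q s + f p s * f q s) / 2) := by
        intro p q
        rw [hentry p q, intervalIntegral.integral_const_mul]
      calc ∑ p : Bool × Fin r, ∑ q : Bool × Fin r, x p * x q * M p q
          = ∑ p : Bool × Fin r, ∫ s in (0:ℝ)..1,
              ∑ q : Bool × Fin r, x p * x q * ((e p s * e q s + f p s * f q s) / 2) := by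
            refine Finset.sum_congr rfl fun p _ => ?_
            refine (Finset.sum_congr rfl fun q _ => h2 p q).trans ?_
            exact (intervalIntegral.integral_finset_sum
              fun q _ => (hco p q).intervalIntegrable 0 1).symm
        _ = ∫ s in (0:ℝ)..1, ∑ p : Bool × Fin r,
              ∑ q : Bool × Fin r, x p * x q * ((e p s * e q s + f p s * f q s) / 2) := by
            exact (intervalIntegral.integral_finset_sum
              fun p _ => (continuous_finset_sum _ fun q _ => hco p q).intervalIntegrable 0 1).symm
        _ = _ := by
            refine intervalIntegral.integral_congr fun s _ => ?_
            have hE2 : (∑ p : Bool × Fin r, x p * e p s) ^ 2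
                = ∑ p : Bool × Fin r, ∑ q : Bool × Fin r, (x p * e p s) * (x q * e q s) := by
              rw [sq]; exact Fintype.sum_mul_sum _ _
            have hF2 : (∑ p : Bool × Fin r, x p * f p s) ^ 2
                = ∑ p : Bool × Fin r, ∑ q : Bool × Fin r, (x p * f p s) * (x q * f q s) := by
              rw [sq]; exact Fintype.sum_mul_sum _ _
            show _ = ((∑ p : Bool × Fin r, x p * e p s) ^ 2
                + (∑ p : Bool × Fin r, x p * f p s) ^ 2) / 2
            rw [hE2, hF2, ← Finset.sum_add_distrib, Finset.sum_div]
            refine Finset.sum_congr rfl fun p _ => ?_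
            rw [← Finset.sum_add_distrib, Finset.sum_div]
            refine Finset.sum_congr rfl fun q _ => ?_
            ring
    -- key: if E and F vanish on (0,1) then x = 0
    have hvanish : ¬ (∀ s ∈ Set.Ioo (0:ℝ) 1, E s = 0 ∧ F s = 0) := by
      simp only [hE_def, hF_def]
      intro hvan
      apply hx
      set w : Fin r → ℂ := fun j => (z j : ℂ) * Complex.I with hw_def
      set c : Fin r → ℂ := fun j => (x (false, j) : ℂ) + (x (true, j) : ℂ) * Complex.I with hc_def
      set h : ℕ → ℝ → ℂ := fun k s => ∑ j : Fin r, c j * w j ^ k * Complex.exp (w j * s) with hh_def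
      have hexp : ∀ (j : Fin r) (s : ℝ), Complex.exp (w j * s)
          = (Real.cos (z j * s) : ℂ) + (Real.sin (z j * s) : ℂ) * Complex.I := by
        intro j s
        rw [show w j * (s : ℝ) = ((z j * s : ℝ) : ℂ) * Complex.I by rw [hw_def]; push_cast; ring]
        rw [Complex.exp_mul_I, Complex.ofReal_cos, Complex.ofReal_sin]
      have h0 : ∀ s : ℝ, h 0 s = ((∑ p : Bool × Fin r, x p * e p s : ℝ) : ℂ)
          + ((∑ p : Bool × Fin r, x p * f p s : ℝ) : ℂ) * Complex.I := by
        intro s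
        rw [hh_def]
        push_cast
        rw [Finset.sum_mul, ← Finset.sum_add_distrib]
        rw [Fintype.sum_prod_type, Fintype.sum_bool, ← Finset.sum_add_distrib]
        refine Finset.sum_congr rfl fun j _ => ?_
        rw [pow_zero, mul_one, hexp j s]
        simp only [he_def, hf_def, hc_def, if_true, if_false, Bool.false_eq_true]
        push_cast
        ring_nf
        rw [Complex.I_sq]
        ring
      have hind : ∀ k : ℕ, ∀ s ∈ Set.Ioo (0:ℝ) 1, h k s = 0 := by
        intro k
        induction k with
        | zero =>
          intro s hs
          rw [h0 s, (hvan s hs).1, (hvan s hs).2]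
          simp
        | succ k ih =>
          intro s hs
          have hder : HasDerivAt (h k) (h (k + 1) s) s := by
            have hsum : ∀ j ∈ Finset.univ, HasDerivAt
                (fun t : ℝ => c j * w j ^ k * Complex.exp (w j * t))
                (c j * w j ^ (k + 1) * Complex.exp (w j * s)) s := by
              intro j _
              have hd1 : HasDerivAt (fun t : ℝ => ((t : ℝ) : ℂ)) 1 s := by
                simpa using HasDerivAt.ofReal_comp (hasDerivAt_id s)
              have hd2 := (hd1.const_mul (w j)).cexp
              have hd3 := hd2.const_mul (c j * w j ^ k)
              have hrw : c j * w j ^ (k + 1) * Complex.exp (w j * s)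
                  = c j * w j ^ k * (Complex.exp (w j * s) * (w j * 1)) := by
                rw [pow_succ]
                ring
              rw [hrw]
              exact hd3
            exact HasDerivAt.fun_sum hsum
          have hzero : deriv (h k) s = 0 := by
            have hev : h k =ᶠ[nhds s] (fun _ => (0 : ℂ)) :=
              Filter.eventuallyEq_of_mem (isOpen_Ioo.mem_nhds hs) (fun t ht => ih t ht)
            rw [hev.deriv_eq]
            simp
          rw [← hder.deriv, hzero]
      have hhalf : ∀ k : ℕ,
          ∑ j : Fin r, (c j * Complex.exp (w j * ((1:ℝ)/2))) * w j ^ k = 0 := by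
        intro k
        have hk := hind k (1/2) (by norm_num)
        rw [hh_def] at hk
        rw [← hk]
        refine Finset.sum_congr rfl fun j _ => ?_
        push_cast
        ring
      have hwinj : Function.Injective w := by
        intro i j hij
        apply hz
        rw [hw_def] at hij
        have := mul_right_cancel₀ Complex.I_ne_zero hij
        exact_mod_cast this
      have hv0 : (fun j : Fin r => c j * Complex.exp (w j * ((1:ℝ)/2))) = 0 :=
        Matrix.eq_zero_of_forall_pow_sum_mul_pow_eq_zero hwinj fun i => hhalf (i : ℕ)
      have hc0 : ∀ j, c j = 0 := by
        intro j
        have hj := congrFun hv0 j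
        simp only [Pi.zero_apply, mul_eq_zero, Complex.exp_ne_zero, or_false] at hj
        exact hj
      funext p
      rcases p with ⟨b, j⟩
      have hj := hc0 j
      rw [hc_def, Complex.ext_iff] at hj
      simp only [Complex.add_re, Complex.ofReal_re, Complex.mul_re, Complex.I_re, Complex.I_im,
        Complex.ofReal_im, Complex.add_im, Complex.mul_im, Complex.zero_re, Complex.zero_im] at hj
      obtain ⟨hj1, hj2⟩ := hj
      cases b
      · simpa using hj1
      · simpa using hj2
    -- positivity
    rw [hQ]
    push_neg at hvanish
    obtain ⟨s0, hs0, hs0'⟩ := hvanish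
    set G : ℝ → ℝ := fun s => ((E s) ^ 2 + (F s) ^ 2) / 2 with hG_def
    have hcG : Continuous G := by fun_prop
    have hGnn : ∀ s, 0 ≤ G s := fun s => by positivity
    have hGs0 : 0 < G s0 := by
      rcases (hGnn s0).lt_or_eq with h | h
      · exact h
      · exfalso
        have h2 : E s0 ^ 2 + F s0 ^ 2 = 0 := by
          have := h.symm
          rw [hG_def] at this
          linarith
        have hE0 : E s0 = 0 := by nlinarith [sq_nonneg (E s0), sq_nonneg (F s0)]
        have hF0 : F s0 = 0 := by nlinarith [sq_nonneg (E s0), sq_nonneg (F s0)]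
        exact hs0' hE0 hF0
    rw [intervalIntegral.integral_pos_iff_support_of_nonneg_ae
      (Filter.Eventually.of_forall hGnn) (hcG.intervalIntegrable 0 1)]
    refine ⟨one_pos, ?_⟩
    have hU : IsOpen (Set.Ioo (0:ℝ) 1 ∩ G ⁻¹' {0}ᶜ) :=
      (isOpen_Ioo.inter (isOpen_compl_singleton.preimage hcG))
    have hne : (Set.Ioo (0:ℝ) 1 ∩ G ⁻¹' {0}ᶜ).Nonempty := ⟨s0, hs0, fun h => hGs0.ne' h⟩
    refine lt_of_lt_of_le (hU.measure_pos _ hne) (MeasureTheory.measure_mono ?_)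
    rintro s ⟨hs1, hs2⟩
    exact ⟨hs2, hs1.1, hs1.2.le⟩
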